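/- Let $(X, \Sigma, \mu)$, $(Y, T, \nu)$, $(X \times Y, \Upsilon, \upsilon)$ be probability spaces satisfying: $\Sigma \otimes T \subseteq \Upsilon$; the Fubini property $[C]$ (for each $E \in \Upsilon$ there is $N \in \Sigma$ with $\mu(N)=0$ such that $E_x \in T$ for $x \notin N$, $x \mapsto \nu(E_x)$ is $\Sigma$-measurable on $N^c$, and $\upsilon(E) = \int_{N^c} \nu(E_x)\,d\mu$); and the symmetric property $[\overline{C}]$ with the roles of the factors interchanged. Let $h = f \otimes g$ with $f \colon X \to \mathbb{R}$, $g \colon Y \to \mathbb{R}$. If $h \in \mathcal{L}^p(\upsilon)$, then either $f = 0$ off a $\mu$-null set, or $g = 0$ off a $\nu$-null set, or both $f \in \mathcal{L}^p(\mu)$ and $g \in \mathcal{L}^p(\nu)$. -/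

import Mathlib

open MeasureTheory
open scoped ENNReal

/-- The Fubini property `[C]` for a triple of (probability) spaces:
for each `Υ`-measurable `E` there is a `μ`-null `N ∈ Σ` such that all vertical sections over
`Nᶜ` are measurable, `x ↦ ν (E_x)` is `Σ`-measurable on `Nᶜ`, and
`υ E = ∫_{Nᶜ} ν (E_x) dμ`. -/
def PropC {X Y : Type*} [MeasurableSpace X] [MeasurableSpace Y]
    (mXY : MeasurableSpace (X × Y)) (μ : Measure X) (ν : Measure Y)
    (υ : @Measure (X × Y) mXY) : Prop :=
  ∀ E : Set (X × Y), MeasurableSet[mXY] E →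
    ∃ N : Set X, MeasurableSet N ∧ μ N = 0 ∧
      (∀ x ∉ N, MeasurableSet {y | (x, y) ∈ E}) ∧
      (∀ t : Set ℝ≥0∞, MeasurableSet t →
        MeasurableSet (Nᶜ ∩ {x | ν {y | (x, y) ∈ E} ∈ t})) ∧
      υ E = ∫⁻ x in Nᶜ, ν {y | (x, y) ∈ E} ∂μ

/-- The symmetric Fubini property `[C̄]`, with the roles of the factors interchanged. -/
def PropCbar {X Y : Type*} [MeasurableSpace X] [MeasurableSpace Y]
    (mXY : MeasurableSpace (X × Y)) (μ : Measure X) (ν : Measure Y)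
    (υ : @Measure (X × Y) mXY) : Prop :=
  ∀ E : Set (X × Y), MeasurableSet[mXY] E →
    ∃ M : Set Y, MeasurableSet M ∧ ν M = 0 ∧
      (∀ y ∉ M, MeasurableSet {x | (x, y) ∈ E}) ∧
      (∀ t : Set ℝ≥0∞, MeasurableSet t →
        MeasurableSet (Mᶜ ∩ {y | μ {x | (x, y) ∈ E} ∈ t})) ∧
      υ E = ∫⁻ y in Mᶜ, μ {x | (x, y) ∈ E} ∂ν

open Set

/-- Auxiliary: `L^p`-finiteness from a distribution-function domination. -/
lemma stmt15_lemA {α Z : Type*} [MeasurableSpace α] [mZ : MeasurableSpace Z]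
    (μ : Measure α) (κ : Measure Z)
    (f : α → ℝ) (h : Z → ℝ) (hf : Measurable f) (hh : Measurable h)
    (δ : ℝ≥0∞) (hδ : δ ≠ 0) (hδt : δ ≠ ⊤)
    (hdist : ∀ t : ℝ, 0 < t → δ * μ {x | t < |f x|} ≤ κ {z | t < |h z|})
    (p : ℝ≥0∞) (hLp : eLpNorm h p κ < ⊤) :
    eLpNorm f p μ < ⊤ := by
  rcases eq_or_ne p 0 with rfl | hp0
  · simp [eLpNorm_exponent_zero]
  rcases eq_or_ne p ∞ with rfl | hptop
  · rw [eLpNorm_exponent_top] at hLp ⊢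
    set C := eLpNormEssSup h κ with hC
    set t : ℝ := C.toReal + 1 with ht
    have htpos : 0 < t := by
      have : (0:ℝ) ≤ C.toReal := ENNReal.toReal_nonneg
      linarith
    have hhC : ∀ᵐ z ∂κ, (‖h z‖₊ : ℝ≥0∞) ≤ C := ae_le_eLpNormEssSup
    have hnull : κ {z | t < |h z|} = 0 := by
      have hae : ∀ᵐ z ∂κ, ¬ (t < |h z|) := by
        filter_upwards [hhC] with z hz
        push_neg
        have h1 : ENNReal.ofReal |h z| ≤ C := by
          rw [← Real.enorm_eq_ofReal_abs]; exact hz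
        have h2 : |h z| ≤ C.toReal :=
          (ENNReal.ofReal_le_iff_le_toReal hLp.ne).mp h1
        linarith
      have := ae_iff.mp hae
      simpa [not_not] using this
    have hzero : μ {x | t < |f x|} = 0 := by
      have := (hdist t htpos).trans_eq hnull
      rcases (mul_eq_zero.mp (le_antisymm this zero_le)) with h' | h'
      · exact absurd h' hδ
      · exact h'
    have haef : ∀ᵐ x ∂μ, ‖f x‖ ≤ t := by
      rw [ae_iff]
      have : {x | ¬ ‖f x‖ ≤ t} = {x | t < |f x|} := by
        ext x; simp [Real.norm_eq_abs, not_le]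
      rw [this]; exact hzero
    exact eLpNormEssSup_lt_top_of_ae_bound haef
  -- case 0 < p < ∞
  have hq : 0 < p.toReal := ENNReal.toReal_pos hp0 hptop
  set q := p.toReal with hqdef
  rw [eLpNorm_lt_top_iff_lintegral_rpow_enorm_lt_top hp0 hptop]
  have hinth : ∫⁻ z, ‖h z‖ₑ ^ q ∂κ < ⊤ :=
    lintegral_rpow_enorm_lt_top_of_eLpNorm_lt_top hp0 hptop hLp
  have keyf : (fun a => ‖f a‖ₑ ^ q) = fun a => ENNReal.ofReal (|f a| ^ q) := by
    funext a
    rw [Real.enorm_eq_ofReal_abs, ← ENNReal.ofReal_rpow_of_nonneg (abs_nonneg _) hq.le]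
  have keyh : (fun z => ‖h z‖ₑ ^ q) = fun z => ENNReal.ofReal (|h z| ^ q) := by
    funext z
    rw [Real.enorm_eq_ofReal_abs, ← ENNReal.ofReal_rpow_of_nonneg (abs_nonneg _) hq.le]
  rw [keyf]
  rw [keyh] at hinth
  have hmf : AEMeasurable (fun a => |f a| ^ q) μ :=
    ((Real.continuous_rpow_const hq.le).measurable.comp hf.abs).aemeasurable
  have hmh : AEMeasurable (fun z => |h z| ^ q) κ :=
    ((Real.continuous_rpow_const hq.le).measurable.comp hh.abs).aemeasurable
  have hnnf : 0 ≤ᵐ[μ] fun a => |f a| ^ q :=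
    Filter.Eventually.of_forall fun a => Real.rpow_nonneg (abs_nonneg _) _
  have hnnh : 0 ≤ᵐ[κ] fun z => |h z| ^ q :=
    Filter.Eventually.of_forall fun z => Real.rpow_nonneg (abs_nonneg _) _
  rw [lintegral_eq_lintegral_meas_lt μ hnnf hmf]
  rw [lintegral_eq_lintegral_meas_lt κ hnnh hmh] at hinth
  have hδinv : δ⁻¹ ≠ ⊤ := by simpa using hδ
  have hbound : ∫⁻ t in Ioi 0, μ {a | t < |f a| ^ q} ≤
      ∫⁻ t in Ioi 0, δ⁻¹ * κ {z | t < |h z| ^ q} := by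
    apply lintegral_mono_ae
    filter_upwards [ae_restrict_mem measurableSet_Ioi] with t ht
    have htpos : (0:ℝ) < t := ht
    have hs : (0:ℝ) < t ^ q⁻¹ := Real.rpow_pos_of_pos htpos _
    have hsetf : {a | t < |f a| ^ q} = {a | t ^ q⁻¹ < |f a|} := by
      ext a
      rw [mem_setOf_eq, mem_setOf_eq, ← Real.rpow_lt_rpow_iff hs.le (abs_nonneg _) hq,
        Real.rpow_inv_rpow htpos.le hq.ne']
    have hseth : {z | t < |h z| ^ q} = {z | t ^ q⁻¹ < |h z|} := by
      ext z
      rw [mem_setOf_eq, mem_setOf_eq, ← Real.rpow_lt_rpow_iff hs.le (abs_nonneg _) hq,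
        Real.rpow_inv_rpow htpos.le hq.ne']
    rw [hsetf, hseth]
    have := hdist (t ^ q⁻¹) hs
    calc μ {a | t ^ q⁻¹ < |f a|}
        = δ⁻¹ * (δ * μ {a | t ^ q⁻¹ < |f a|}) := by
          rw [← mul_assoc, ENNReal.inv_mul_cancel hδ hδt, one_mul]
      _ ≤ δ⁻¹ * κ {z | t ^ q⁻¹ < |h z|} := mul_le_mul_right this _
  calc ∫⁻ t in Ioi 0, μ {a | t < |f a| ^ q}
      ≤ ∫⁻ t in Ioi 0, δ⁻¹ * κ {z | t < |h z| ^ q} := hbound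
    _ = δ⁻¹ * ∫⁻ t in Ioi 0, κ {z | t < |h z| ^ q} :=
        lintegral_const_mul' _ _ hδinv
    _ < ⊤ := ENNReal.mul_lt_top (by simpa [lt_top_iff_ne_top] using hδinv) hinth

/-- Auxiliary: distribution bound derived from property `[C]`. -/
lemma stmt15_distBound1 {X Y : Type*} [mX : MeasurableSpace X] [mY : MeasurableSpace Y]
    (mXY : MeasurableSpace (X × Y)) (μ : Measure X) (ν : Measure Y)
    (υ : @Measure (X × Y) mXY)
    (hC : PropC mXY μ ν υ) (f : X → ℝ) (g : Y → ℝ) (hf : Measurable f)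
    (hmeas : Measurable[mXY] fun z : X × Y => f z.1 * g z.2)
    (ε : ℝ) (hε : 0 < ε) (t : ℝ) :
    ν {y | ε ≤ |g y|} * μ {x | t < |ε * f x|} ≤ υ {z : X × Y | t < |f z.1 * g z.2|} := by
  set E : Set (X × Y) := {z | t < |f z.1 * g z.2|} with hE
  have hEm : MeasurableSet[mXY] E := by
    have : E = (fun z : X × Y => f z.1 * g z.2) ⁻¹' {r : ℝ | t < |r|} := rfl
    rw [this]
    exact hmeas (measurableSet_lt measurable_const measurable_abs)
  obtain ⟨N, hNm, hN0, hsec, -, hEq⟩ := hC E hEm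
  set δ := ν {y | ε ≤ |g y|} with hδ
  set A := {x | t < |ε * f x|} with hA
  have hAm : MeasurableSet A := by
    have : A = (fun x => |ε * f x|) ⁻¹' Ioi t := rfl
    rw [this]; exact ((hf.const_mul ε).abs) measurableSet_Ioi
  have hpt : ∀ x, A.indicator (fun _ => δ) x ≤ ν {y | (x, y) ∈ E} := by
    intro x
    by_cases hx : x ∈ A
    · rw [Set.indicator_of_mem hx]
      apply measure_mono
      intro y hy
      have hy' : ε ≤ |g y| := hy
      have hx' : t < ε * |f x| := by
        have := hx; rw [hA, mem_setOf_eq, abs_mul, abs_of_pos hε] at this; exact this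
      show t < |f x * g y|
      rw [abs_mul]
      calc t < ε * |f x| := hx'
        _ ≤ |g y| * |f x| := mul_le_mul_of_nonneg_right hy' (abs_nonneg _)
        _ = |f x| * |g y| := mul_comm _ _
    · rw [Set.indicator_of_notMem hx]; exact zero_le
  calc δ * μ A = δ * μ (A ∩ Nᶜ) := by
        rw [measure_inter_conull (by rwa [compl_compl])]
    _ = ∫⁻ x in Nᶜ, A.indicator (fun _ => δ) x ∂μ := by
        rw [lintegral_indicator hAm, setLIntegral_const,
          Measure.restrict_apply hAm]
    _ ≤ ∫⁻ x in Nᶜ, ν {y | (x, y) ∈ E} ∂μ := lintegral_mono hpt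
    _ = υ E := hEq.symm

/-- Auxiliary: distribution bound derived from property `[C̄]`. -/
lemma stmt15_distBound2 {X Y : Type*} [mX : MeasurableSpace X] [mY : MeasurableSpace Y]
    (mXY : MeasurableSpace (X × Y)) (μ : Measure X) (ν : Measure Y)
    (υ : @Measure (X × Y) mXY)
    (hCbar : PropCbar mXY μ ν υ) (f : X → ℝ) (g : Y → ℝ) (hg : Measurable g)
    (hmeas : Measurable[mXY] fun z : X × Y => f z.1 * g z.2)
    (ε : ℝ) (hε : 0 < ε) (t : ℝ) :
    μ {x | ε ≤ |f x|} * ν {y | t < |ε * g y|} ≤ υ {z : X × Y | t < |f z.1 * g z.2|} := by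
  set E : Set (X × Y) := {z | t < |f z.1 * g z.2|} with hE
  have hEm : MeasurableSet[mXY] E := by
    have : E = (fun z : X × Y => f z.1 * g z.2) ⁻¹' {r : ℝ | t < |r|} := rfl
    rw [this]
    exact hmeas (measurableSet_lt measurable_const measurable_abs)
  obtain ⟨M, hMm, hM0, hsec, -, hEq⟩ := hCbar E hEm
  set δ := μ {x | ε ≤ |f x|} with hδ
  set A := {y | t < |ε * g y|} with hA
  have hAm : MeasurableSet A := by
    have : A = (fun y => |ε * g y|) ⁻¹' Ioi t := rfl
    rw [this]; exact ((hg.const_mul ε).abs) measurableSet_Ioi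
  have hpt : ∀ y, A.indicator (fun _ => δ) y ≤ μ {x | (x, y) ∈ E} := by
    intro y
    by_cases hy : y ∈ A
    · rw [Set.indicator_of_mem hy]
      apply measure_mono
      intro x hx
      have hx' : ε ≤ |f x| := hx
      have hy' : t < ε * |g y| := by
        have := hy; rw [hA, mem_setOf_eq, abs_mul, abs_of_pos hε] at this; exact this
      show t < |f x * g y|
      rw [abs_mul]
      calc t < ε * |g y| := hy'
        _ ≤ |f x| * |g y| := mul_le_mul_of_nonneg_right hx' (abs_nonneg _)
    · rw [Set.indicator_of_notMem hy]; exact zero_le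
  calc δ * ν A = δ * ν (A ∩ Mᶜ) := by
        rw [measure_inter_conull (by rwa [compl_compl])]
    _ = ∫⁻ y in Mᶜ, A.indicator (fun _ => δ) y ∂ν := by
        rw [lintegral_indicator hAm, setLIntegral_const,
          Measure.restrict_apply hAm]
    _ ≤ ∫⁻ y in Mᶜ, μ {x | (x, y) ∈ E} ∂ν := lintegral_mono hpt
    _ = υ E := hEq.symm

/-- Auxiliary: a positive level set for a function that is not a.e. zero. -/
lemma stmt15_existsLevel {Y : Type*} [MeasurableSpace Y] (ν : Measure Y) (g : Y → ℝ)
    (hne : ¬ ∀ᵐ y ∂ν, g y = 0) :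
    ∃ ε : ℝ, 0 < ε ∧ 0 < ν {y | ε ≤ |g y|} := by
  by_contra hcon
  push_neg at hcon
  have hz : ∀ n : ℕ, ν {y | (1 : ℝ)/(n+1) ≤ |g y|} = 0 := fun n =>
    le_antisymm (hcon _ (by positivity)) zero_le
  apply hne
  rw [ae_iff]
  have hsub : {y | ¬ g y = 0} ⊆ ⋃ n : ℕ, {y | (1:ℝ)/(n+1) ≤ |g y|} := by
    intro y hy
    have hgy : 0 < |g y| := abs_pos.mpr hy
    obtain ⟨n, hn⟩ := exists_nat_gt (1/|g y|)
    refine mem_iUnion.mpr ⟨n, ?_⟩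
    show (1:ℝ)/(n+1) ≤ |g y|
    rw [div_le_iff₀ (by positivity)]
    have h2 : 1/|g y| < (n:ℝ) + 1 := hn.trans (by linarith)
    rw [div_lt_iff₀ hgy] at h2
    nlinarith
  exact measure_mono_null hsub (measure_iUnion_null hz)

theorem stmt15 {X Y : Type*} [mX : MeasurableSpace X] [mY : MeasurableSpace Y]
    (mXY : MeasurableSpace (X × Y))
    (μ : Measure X) (ν : Measure Y) (υ : @Measure (X × Y) mXY)
    [IsProbabilityMeasure μ] [IsProbabilityMeasure ν]
    (hυprob : @IsProbabilityMeasure _ mXY υ)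
    (hsub : mX.prod mY ≤ mXY)
    (hC : PropC mXY μ ν υ) (hCbar : PropCbar mXY μ ν υ)
    (p : ℝ≥0∞) (f : X → ℝ) (g : Y → ℝ)
    (hmeas : Measurable[mXY] fun z : X × Y => f z.1 * g z.2)
    (hLp : eLpNorm (fun z : X × Y => f z.1 * g z.2) p υ < ⊤) :
    (∃ N : Set X, MeasurableSet N ∧ μ N = 0 ∧ ∀ x ∉ N, f x = 0) ∨
    (∃ M : Set Y, MeasurableSet M ∧ ν M = 0 ∧ ∀ y ∉ M, g y = 0) ∨
    ((Measurable f ∧ eLpNorm f p μ < ⊤) ∧ (Measurable g ∧ eLpNorm g p ν < ⊤)) := by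
  classical
  -- the null sets from [C̄] for the sets {h > q}, q ∈ ℚ
  choose M hMm hM0 hMsec hM4 hM5 using fun q : ℚ =>
    hCbar _ (hmeas (measurableSet_Ioi (a := (q : ℝ))))
  -- the null sets from [C] for the sets {h > q}, q ∈ ℚ
  choose N hNm hN0 hNsec hN4 hN5 using fun q : ℚ =>
    hC _ (hmeas (measurableSet_Ioi (a := (q : ℝ))))
  by_cases hg0 : ∀ y ∉ (⋃ q : ℚ, M q), g y = 0
  · exact Or.inr (Or.inl ⟨_, MeasurableSet.iUnion hMm, measure_iUnion_null hM0, hg0⟩)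
  push_neg at hg0
  obtain ⟨y0, hy0M, hy00⟩ := hg0
  -- f is measurable
  have hfy0 : Measurable fun x => f x * g y0 := by
    apply measurable_of_Ioi
    intro a
    have hEq : (fun x => f x * g y0) ⁻¹' Ioi a =
        ⋃ (q : ℚ) (_ : a < (q : ℝ)), {x | (q : ℝ) < f x * g y0} := by
      ext x
      simp only [mem_preimage, mem_Ioi, mem_iUnion, mem_setOf_eq]
      constructor
      · intro hx
        obtain ⟨q, hq1, hq2⟩ := exists_rat_btwn hx
        exact ⟨q, hq1, hq2⟩
      · rintro ⟨q, hq1, hq2⟩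
        exact hq1.trans hq2
    rw [hEq]
    exact MeasurableSet.iUnion fun q => MeasurableSet.iUnion fun _ =>
      hMsec q y0 (fun hmem => hy0M (mem_iUnion.mpr ⟨q, hmem⟩))
  have hfm : Measurable f := by
    have : f = fun x => (f x * g y0) * (g y0)⁻¹ := by
      funext x; rw [mul_assoc, mul_inv_cancel₀ hy00, mul_one]
    rw [this]
    exact hfy0.mul_const _
  by_cases hf0 : ∀ x ∉ (⋃ q : ℚ, N q), f x = 0
  · exact Or.inl ⟨_, MeasurableSet.iUnion hNm, measure_iUnion_null hN0, hf0⟩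
  push_neg at hf0
  obtain ⟨x0, hx0N, hx00⟩ := hf0
  -- g is measurable
  have hgx0 : Measurable fun y => f x0 * g y := by
    apply measurable_of_Ioi
    intro a
    have hEq : (fun y => f x0 * g y) ⁻¹' Ioi a =
        ⋃ (q : ℚ) (_ : a < (q : ℝ)), {y | (q : ℝ) < f x0 * g y} := by
      ext y
      simp only [mem_preimage, mem_Ioi, mem_iUnion, mem_setOf_eq]
      constructor
      · intro hy
        obtain ⟨q, hq1, hq2⟩ := exists_rat_btwn hy
        exact ⟨q, hq1, hq2⟩
      · rintro ⟨q, hq1, hq2⟩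
        exact hq1.trans hq2
    rw [hEq]
    exact MeasurableSet.iUnion fun q => MeasurableSet.iUnion fun _ =>
      hNsec q x0 (fun hmem => hx0N (mem_iUnion.mpr ⟨q, hmem⟩))
  have hgm : Measurable g := by
    have : g = fun y => (f x0)⁻¹ * (f x0 * g y) := by
      funext y; rw [← mul_assoc, inv_mul_cancel₀ hx00, one_mul]
    rw [this]
    exact hgx0.const_mul _
  -- a.e. zero cases
  by_cases haef : ∀ᵐ x ∂μ, f x = 0
  · refine Or.inl ⟨{x | f x ≠ 0}, ?_, ?_, fun x hx => not_not.mp fun h => hx h⟩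
    · exact (hfm (measurableSet_singleton 0)).compl
    · rw [ae_iff] at haef; exact haef
  by_cases haeg : ∀ᵐ y ∂ν, g y = 0
  · refine Or.inr (Or.inl ⟨{y | g y ≠ 0}, ?_, ?_, fun y hy => not_not.mp fun h => hy h⟩)
    · exact (hgm (measurableSet_singleton 0)).compl
    · rw [ae_iff] at haeg; exact haeg
  -- both Lp norms are finite
  obtain ⟨ε, hε, hδ⟩ := stmt15_existsLevel ν g haeg
  obtain ⟨ε', hε', hδ'⟩ := stmt15_existsLevel μ f haef
  refine Or.inr (Or.inr ⟨⟨hfm, ?_⟩, ⟨hgm, ?_⟩⟩)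
  · -- eLpNorm f p μ < ⊤
    have hdist : ∀ t : ℝ, 0 < t →
        ν {y | ε ≤ |g y|} * μ {x | t < |ε * f x|} ≤
          υ {z : X × Y | t < |f z.1 * g z.2|} :=
      fun t _ => stmt15_distBound1 mXY μ ν υ hC f g hfm hmeas ε hε t
    have hfin : eLpNorm (fun x => ε * f x) p μ < ⊤ := by
      refine stmt15_lemA (mZ := mXY) μ υ _ _ (hfm.const_mul ε) hmeas
        (ν {y | ε ≤ |g y|}) hδ.ne' (measure_ne_top ν _) (fun t ht => hdist t ht) p hLp
    have heq : ((ε⁻¹ : ℝ) • fun x => ε * f x) = f := by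
      funext x
      simp only [Pi.smul_apply, smul_eq_mul]
      rw [← mul_assoc, inv_mul_cancel₀ hε.ne', one_mul]
    rw [← heq, eLpNorm_const_smul]
    exact ENNReal.mul_lt_top ENNReal.coe_lt_top hfin
  · -- eLpNorm g p ν < ⊤
    have hdist : ∀ t : ℝ, 0 < t →
        μ {x | ε' ≤ |f x|} * ν {y | t < |ε' * g y|} ≤
          υ {z : X × Y | t < |f z.1 * g z.2|} :=
      fun t _ => stmt15_distBound2 mXY μ ν υ hCbar f g hgm hmeas ε' hε' t
    have hfin : eLpNorm (fun y => ε' * g y) p ν < ⊤ := by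
      refine stmt15_lemA (mZ := mXY) ν υ _ _ (hgm.const_mul ε') hmeas
        (μ {x | ε' ≤ |f x|}) hδ'.ne' (measure_ne_top μ _) (fun t ht => hdist t ht) p hLp
    have heq : ((ε'⁻¹ : ℝ) • fun y => ε' * g y) = g := by
      funext y
      simp only [Pi.smul_apply, smul_eq_mul]
      rw [← mul_assoc, inv_mul_cancel₀ hε'.ne', one_mul]
    rw [← heq, eLpNorm_const_smul]
    exact ENNReal.mul_lt_top ENNReal.coe_lt_top hfin
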